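/- Let q ≥ 2 and w ≥ 3 be integers, let Π be a finite projective plane of order q, and fix a point A of Π. Then the number of (w+1)-element point subsets K of Π with A ∉ K such that the sum over all lines ℓ through A of the binomial coefficient C(#(ℓ ∩ K), 2) equals exactly 2 is C(q+1,2)·C(q,2)^2·q^(w−3)·C(q−1, w−3), where C(n, k) denotes the binomial coefficient. -/

import Mathlib

open Finset

lemma profile_iff {ι : Type*} [Fintype ι] [DecidableEq ι] (w : ℕ) (hw : 3 ≤ w) (n : ι → ℕ) :
    (∑ b, n b = w + 1 ∧ ∑ b, (n b).choose 2 = 2) ↔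
      ((univ.filter fun b => n b = 2).card = 2 ∧
        (univ.filter fun b => n b = 1).card = w - 3 ∧ ∀ b, n b ≤ 2) := by
  have key : ∀ (_ : ∀ b, n b ≤ 2),
      (∑ b, (n b).choose 2 = (univ.filter fun b => n b = 2).card) ∧
      (∑ b, n b = 2 * (univ.filter fun b => n b = 2).card +
        (univ.filter fun b => n b = 1).card) := by
    intro hle
    constructor
    · rw [Finset.card_filter]
      exact Finset.sum_congr rfl fun b _ => by
        have := hle b; interval_cases (n b) <;> simp
    · rw [Finset.card_filter, Finset.card_filter, Finset.mul_sum, ← Finset.sum_add_distrib]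
      exact Finset.sum_congr rfl fun b _ => by
        have := hle b; interval_cases (n b) <;> simp
  constructor
  · rintro ⟨h1, h2⟩
    have hle : ∀ b, n b ≤ 2 := by
      intro b
      by_contra hb
      push_neg at hb
      have h3 : 3 ≤ (n b).choose 2 := by
        calc 3 = Nat.choose 3 2 := by decide
        _ ≤ (n b).choose 2 := Nat.choose_le_choose 2 hb
      have := Finset.single_le_sum (f := fun b => (n b).choose 2)
        (fun b _ => Nat.zero_le _) (Finset.mem_univ b)
      omega
    obtain ⟨k1, k2⟩ := key hle
    refine ⟨by omega, by omega, hle⟩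
  · rintro ⟨h2, h1, hle⟩
    obtain ⟨k1, k2⟩ := key hle
    refine ⟨by omega, by omega⟩

lemma count_profile {ι P : Type*} [Fintype ι] [DecidableEq ι] [Fintype P] [DecidableEq P]
    (q w : ℕ) (fib : ι → Finset P) (hfib : ∀ b, (fib b).card = q) :
    (univ.filter fun g : ι → Finset P =>
        (∀ b, g b ⊆ fib b) ∧ (univ.filter fun b => (g b).card = 2).card = 2 ∧
          (univ.filter fun b => (g b).card = 1).card = w ∧ ∀ b, (g b).card ≤ 2).card =
      (Fintype.card ι).choose 2 * (q.choose 2 ^ 2 * q ^ w) * (Fintype.card ι - 2).choose w := by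
  classical
  set Pairs : Finset ((_ : Finset ι) × Finset ι) :=
    (univ.powersetCard 2).sigma (fun s => sᶜ.powersetCard w) with hPairs
  set π : (ι → Finset P) → ((_ : Finset ι) × Finset ι) :=
    fun g => ⟨univ.filter fun b => (g b).card = 2, univ.filter fun b => (g b).card = 1⟩ with hπ
  rw [Finset.card_eq_sum_card_fiberwise (f := π) (t := Pairs) ?_]
  · -- each fiber has card q.choose 2 ^ 2 * q ^ w
    have hfiber : ∀ st ∈ Pairs,
        ((univ.filter fun g : ι → Finset P =>
          (∀ b, g b ⊆ fib b) ∧ (univ.filter fun b => (g b).card = 2).card = 2 ∧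
            (univ.filter fun b => (g b).card = 1).card = w ∧ ∀ b, (g b).card ≤ 2).filter
          fun g => π g = st).card = q.choose 2 ^ 2 * q ^ w := by
      intro st hst
      rw [Finset.mem_sigma, Finset.mem_powersetCard, Finset.mem_powersetCard] at hst
      obtain ⟨⟨-, hs2⟩, hts, htw⟩ := hst
      have hdisj : ∀ b ∈ st.2, b ∉ st.1 := fun b hb => by
        have := hts hb; simpa using this
      have hset : ((univ.filter fun g : ι → Finset P =>
          (∀ b, g b ⊆ fib b) ∧ (univ.filter fun b => (g b).card = 2).card = 2 ∧
            (univ.filter fun b => (g b).card = 1).card = w ∧ ∀ b, (g b).card ≤ 2).filter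
          fun g => π g = st) = Fintype.piFinset (fun b =>
            if b ∈ st.1 then (fib b).powersetCard 2
            else if b ∈ st.2 then (fib b).powersetCard 1 else {∅}) := by
        ext g
        rw [Fintype.mem_piFinset, Finset.mem_filter, Finset.mem_filter]
        constructor
        · rintro ⟨⟨-, hsub, -, -, hle⟩, hg⟩
          have hg1 : (univ.filter fun b => (g b).card = 2) = st.1 := congrArg Sigma.fst hg
          have hg2 : (univ.filter fun b => (g b).card = 1) = st.2 := congrArg Sigma.snd hg
          intro b
          by_cases h1 : b ∈ st.1
          · rw [if_pos h1, Finset.mem_powersetCard]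
            rw [← hg1] at h1; simp at h1
            exact ⟨hsub b, h1⟩
          · rw [if_neg h1]
            by_cases h2 : b ∈ st.2
            · rw [if_pos h2, Finset.mem_powersetCard]
              rw [← hg2] at h2; simp at h2
              exact ⟨hsub b, h2⟩
            · rw [if_neg h2, Finset.mem_singleton]
              rw [← hg1] at h1; rw [← hg2] at h2
              simp at h1 h2
              have := hle b
              rw [← Finset.card_eq_zero]
              omega
        · intro hg
          have hcard : ∀ b, (g b).card = if b ∈ st.1 then 2 else if b ∈ st.2 then 1 else 0 := by
            intro b
            have hb := hg b
            split_ifs with h1 h2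
            · rw [if_pos h1, Finset.mem_powersetCard] at hb; exact hb.2
            · rw [if_neg h1, if_pos h2, Finset.mem_powersetCard] at hb; exact hb.2
            · rw [if_neg h1, if_neg h2, Finset.mem_singleton] at hb; simp [hb]
          have hsub : ∀ b, g b ⊆ fib b := by
            intro b
            have := hg b
            split_ifs at this with h1 h2
            · exact (Finset.mem_powersetCard.mp this).1
            · exact (Finset.mem_powersetCard.mp this).1
            · rw [Finset.mem_singleton] at this; simp [this]
          have e1 : (univ.filter fun b => (g b).card = 2) = st.1 := by
            ext b
            simp only [Finset.mem_filter, Finset.mem_univ, true_and, hcard b]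
            split_ifs with h1 h2
            · simp [h1]
            · simp [h1]
            · simp [h1]
          have e2 : (univ.filter fun b => (g b).card = 1) = st.2 := by
            ext b
            simp only [Finset.mem_filter, Finset.mem_univ, true_and, hcard b]
            split_ifs with h1 h2
            · simp only [show (2:ℕ) ≠ 1 by omega, false_iff]
              exact fun hb => hdisj b hb h1
            · simp [h2]
            · simp [h2]
          refine ⟨⟨Finset.mem_univ g, hsub, by rw [e1, hs2], by rw [e2, htw],
            fun b => by rw [hcard b]; split_ifs <;> omega⟩, ?_⟩
          simp only [hπ]
          rw [e1, e2]
        done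
      rw [hset, Fintype.card_piFinset]
      have hstep : ∀ b, (if b ∈ st.1 then (fib b).powersetCard 2
          else if b ∈ st.2 then (fib b).powersetCard 1 else {∅}).card =
          if b ∈ st.1 then q.choose 2 else if b ∈ st.2 then q else 1 := by
        intro b
        split_ifs with h1 h2 <;>
          simp [Finset.card_powersetCard, hfib b]
      rw [Finset.prod_congr rfl fun b _ => hstep b]
      have hts' : st.2 ⊆ univ \ st.1 := by
        intro b hb; simp [hdisj b hb]
      rw [← Finset.prod_sdiff (Finset.subset_univ st.1), ← Finset.prod_sdiff hts']
      have p1 : (∏ b ∈ st.1, if b ∈ st.1 then q.choose 2 else if b ∈ st.2 then q else 1) =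
          q.choose 2 ^ 2 := by
        rw [Finset.prod_congr rfl fun b hb => if_pos hb, Finset.prod_const, hs2]
      have p2 : (∏ b ∈ st.2, if b ∈ st.1 then q.choose 2 else if b ∈ st.2 then q else 1) =
          q ^ w := by
        rw [Finset.prod_congr rfl fun b hb => by rw [if_neg (hdisj b hb), if_pos hb],
          Finset.prod_const, htw]
      have p3 : (∏ b ∈ (univ \ st.1) \ st.2,
          if b ∈ st.1 then q.choose 2 else if b ∈ st.2 then q else 1) = 1 := by
        apply Finset.prod_eq_one
        intro b hb
        simp only [Finset.mem_sdiff, Finset.mem_univ] at hb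
        rw [if_neg hb.1.2, if_neg hb.2]
      rw [p1, p2, p3]; ring
    rw [Finset.sum_congr rfl hfiber, Finset.sum_const, smul_eq_mul]
    have : Pairs.card = (Fintype.card ι).choose 2 * (Fintype.card ι - 2).choose w := by
      rw [hPairs, Finset.card_sigma]
      have : ∀ s ∈ (univ : Finset ι).powersetCard 2,
          (sᶜ.powersetCard w).card = (Fintype.card ι - 2).choose w := by
        intro s hs
        rw [Finset.mem_powersetCard] at hs
        have hc : sᶜ.card = Fintype.card ι - 2 := by rw [Finset.card_compl, hs.2]
        rw [Finset.card_powersetCard, hc]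
      rw [Finset.sum_congr rfl this, Finset.sum_const, smul_eq_mul,
        Finset.card_powersetCard, Finset.card_univ]
    rw [this]
    ring
  · -- π maps into Pairs
    intro g hg
    rw [Finset.mem_coe, Finset.mem_filter] at hg
    obtain ⟨-, hsub, h2, h1, hle⟩ := hg
    rw [Finset.mem_coe, hPairs, Finset.mem_sigma, Finset.mem_powersetCard, Finset.mem_powersetCard]
    refine ⟨⟨Finset.subset_univ _, h2⟩, ?_, h1⟩
    intro b hb
    simp only [hπ, Finset.mem_filter, Finset.mem_univ, true_and] at hb ⊢
    rw [Finset.mem_compl]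
    simp only [Finset.mem_filter, Finset.mem_univ, true_and]
    omega

open scoped Classical in
/-- The number of secants of a point set `S` through a point `Q`, counted with multiplicity:
the multiplicity of a line `ℓ` is `C(#(ℓ ∩ S), 2)`. -/
noncomputable def secantCount (L : Type*) {P : Type*} [Membership P L] [Fintype L]
    (S : Set P) (Q : P) : ℕ :=
  ∑ ℓ : L, if Q ∈ ℓ then ({p ∈ S | p ∈ ℓ}.ncard).choose 2 else 0

/-- A point set `S` in a projective plane (with line type `L`) is *(1,μ)-saturating* if for
every point `Q` not in `S` the number of secants of `S` through `Q`, counted with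
multiplicity, is at least `μ`. -/
def IsMuSaturating (L : Type*) {P : Type*} [Membership P L] [Fintype L]
    (S : Set P) (μ : ℕ) : Prop :=
  ∀ Q : P, Q ∉ S → μ ≤ secantCount L S Q

open Configuration Configuration.HasLines Configuration.Nondegenerate

theorem card_subsets_covering_exactly_twice (q w : ℕ) (hq : 2 ≤ q) (hw : 3 ≤ w)
    (P L : Type*) [Fintype P] [Fintype L] [Membership P L]
    [Configuration.ProjectivePlane P L]
    (horder : Configuration.ProjectivePlane.order P L = q) (A : P) :
    Nat.card {K : Finset P // K.card = w + 1 ∧ A ∉ K ∧ secantCount L (↑K : Set P) A = 2} =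
      (q + 1).choose 2 * q.choose 2 ^ 2 * q ^ (w - 3) * (q - 1).choose (w - 3) := by
  classical
  -- the type of lines through A
  set β := {ℓ : L // A ∈ ℓ} with hβ
  have hcardβ : Fintype.card β = q + 1 := by
    rw [← Nat.card_eq_fintype_card]
    show Nat.card {ℓ : L // A ∈ ℓ} = q + 1
    rw [show Nat.card {ℓ : L // A ∈ ℓ} = Configuration.lineCount L A from rfl,
      Configuration.ProjectivePlane.lineCount_eq, horder]
  have hneβ : Nonempty β := by
    rw [← Fintype.card_pos_iff, hcardβ]; omega
  -- uniqueness of the line through A and p ≠ A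
  have huniq : ∀ (p : P), p ≠ A → ∀ b b' : β, p ∈ b.1 → p ∈ b'.1 → b = b' := by
    intro p hp b b' hb hb'
    rcases Configuration.Nondegenerate.eq_or_eq (P := P) (L := L) hb b.2 hb' b'.2 with h | h
    · exact absurd h hp
    · exact Subtype.ext h
  -- the map sending p ≠ A to the line through A and p
  set F : P → β := fun p =>
    if h : p = A then Classical.choice hneβ
    else ⟨mkLine (fun e : A = p => h e.symm), (mkLine_ax _).1⟩ with hFdef
  have hFmem : ∀ p : P, p ≠ A → p ∈ (F p).1 := by
    intro p hp
    simp only [hFdef, dif_neg hp]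
    exact (mkLine_ax _).2
  have hF : ∀ (p : P), p ≠ A → ∀ b : β, F p = b ↔ p ∈ b.1 := by
    intro p hp b
    constructor
    · rintro rfl; exact hFmem p hp
    · intro hb; exact huniq p hp (F p) b (hFmem p hp) hb
  -- the fibers
  set fib : β → Finset P := fun b => univ.filter fun p => p ∈ b.1 ∧ p ≠ A with hfibdef
  have hfibcard : ∀ b : β, (fib b).card = q := by
    intro b
    have h1 : (univ.filter fun p : P => p ∈ b.1) = insert A (fib b) := by
      ext p
      simp only [hfibdef, Finset.mem_insert, Finset.mem_filter, Finset.mem_univ, true_and]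
      by_cases hp : p = A
      · simp [hp, b.2]
      · simp [hp]
    have h2 : (univ.filter fun p : P => p ∈ b.1).card = q + 1 := by
      rw [← Fintype.card_subtype, ← Nat.card_eq_fintype_card]
      rw [show Nat.card {p : P // p ∈ b.1} = Configuration.pointCount P b.1 from rfl,
        Configuration.ProjectivePlane.pointCount_eq, horder]
    have hA : A ∉ fib b := by simp [hfibdef]
    rw [h1, Finset.card_insert_of_notMem hA] at h2
    omega
  have hmemfib : ∀ (b : β) (p : P), p ∈ fib b ↔ p ∈ b.1 ∧ p ≠ A := by
    intro b p; simp [hfibdef]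
  -- rewrite secantCount
  have hsec : ∀ K : Finset P, secantCount L (↑K : Set P) A =
      ∑ b : β, ((K.filter fun p => p ∈ b.1).card).choose 2 := by
    intro K
    rw [secantCount]
    rw [← Finset.sum_subtype (univ.filter fun ℓ : L => A ∈ ℓ)
      (by simp) (fun ℓ : L => ((K.filter fun p => p ∈ ℓ).card).choose 2)]
    rw [Finset.sum_filter]
    apply Finset.sum_congr rfl
    intro ℓ _
    by_cases hA : A ∈ ℓ
    · rw [if_pos hA, if_pos hA]
      congr 1
      have : {p : P | p ∈ (↑K : Set P) ∧ p ∈ ℓ} = ↑(K.filter fun p => p ∈ ℓ) := by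
        ext p; simp
      rw [show {p ∈ (↑K : Set P) | p ∈ ℓ} = ↑(K.filter fun p => p ∈ ℓ) from this,
        Set.ncard_coe_finset]
    · rw [if_neg hA, if_neg hA]
  -- convert Nat.card to a filter card
  rw [Nat.card_eq_fintype_card, Fintype.card_subtype]
  -- the bijection with functions β → Finset P
  have hbij : (univ.filter fun K : Finset P =>
        K.card = w + 1 ∧ A ∉ K ∧ secantCount L (↑K : Set P) A = 2).card =
      (univ.filter fun g : β → Finset P =>
        (∀ b, g b ⊆ fib b) ∧
          (∑ b, (g b).card = w + 1 ∧ ∑ b, ((g b).card).choose 2 = 2)).card := by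
    apply Finset.card_nbij' (i := fun K => fun b : β => K.filter fun p => p ∈ b.1)
      (j := fun g => univ.biUnion g)
    · intro K hK
      rw [Finset.mem_coe, Finset.mem_filter] at hK
      obtain ⟨-, hcard, hA, hsc⟩ := hK
      rw [Finset.mem_coe, Finset.mem_filter]
      have hfilterF : ∀ b : β, (K.filter fun p => p ∈ b.1) = K.filter fun p => F p = b := by
        intro b
        apply Finset.filter_congr
        intro p hp
        have hpA : p ≠ A := fun e => hA (e ▸ hp)
        exact (hF p hpA b).symm
      refine ⟨Finset.mem_univ _, ?_, ?_, ?_⟩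
      · intro b p hp
        rw [Finset.mem_filter] at hp
        rw [hmemfib]
        exact ⟨hp.2, fun e => hA (e ▸ hp.1)⟩
      · show (∑ b : β, (K.filter fun p => p ∈ b.1).card) = w + 1
        calc ∑ b : β, (K.filter fun p => p ∈ b.1).card
            = ∑ b : β, (K.filter fun p => F p = b).card :=
              Finset.sum_congr rfl fun b _ => by rw [hfilterF b]
          _ = K.card :=
              (Finset.card_eq_sum_card_fiberwise fun p _ => Finset.mem_univ (F p)).symm
          _ = w + 1 := hcard
      · show (∑ b : β, ((K.filter fun p => p ∈ b.1).card).choose 2) = 2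
        rw [← hsec K]; exact hsc
    · intro g hg
      rw [Finset.mem_coe, Finset.mem_filter] at hg
      obtain ⟨-, hsub, hsum, hch⟩ := hg
      have hfilter : ∀ b : β, ((univ.biUnion g).filter fun p => p ∈ b.1) = g b := by
        intro b
        ext p
        rw [Finset.mem_filter, Finset.mem_biUnion]
        constructor
        · rintro ⟨⟨b', -, hb'⟩, hpb⟩
          have hpf := (hmemfib b' p).mp (hsub b' hb')
          rw [huniq p hpf.2 b b' hpb hpf.1]
          exact hb'
        · intro hp
          exact ⟨⟨b, Finset.mem_univ b, hp⟩, ((hmemfib b p).mp (hsub b hp)).1⟩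
      have hdisj : ∀ b ∈ (univ : Finset β), ∀ b' ∈ (univ : Finset β), b ≠ b' →
          Disjoint (g b) (g b') := by
        intro b _ b' _ hne
        rw [Finset.disjoint_left]
        intro p hp hp'
        have h1 := (hmemfib b p).mp (hsub b hp)
        have h2 := (hmemfib b' p).mp (hsub b' hp')
        exact hne (huniq p h1.2 b b' h1.1 h2.1)
      rw [Finset.mem_coe, Finset.mem_filter]
      refine ⟨Finset.mem_univ _, ?_, ?_, ?_⟩
      · rw [Finset.card_biUnion hdisj, hsum]
      · intro hA
        rw [Finset.mem_biUnion] at hA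
        obtain ⟨b, -, hb⟩ := hA
        exact ((hmemfib b A).mp (hsub b hb)).2 rfl
      · rw [hsec, Finset.sum_congr rfl fun b _ => by rw [hfilter b], hch]
    · intro K hK
      rw [Finset.mem_coe, Finset.mem_filter] at hK
      obtain ⟨-, -, hA, -⟩ := hK
      ext p
      rw [Finset.mem_biUnion]
      constructor
      · rintro ⟨b, -, hb⟩
        exact (Finset.mem_filter.mp hb).1
      · intro hp
        have hpA : p ≠ A := fun e => hA (e ▸ hp)
        exact ⟨F p, Finset.mem_univ _, Finset.mem_filter.mpr ⟨hp, hFmem p hpA⟩⟩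
    · intro g hg
      rw [Finset.mem_coe, Finset.mem_filter] at hg
      obtain ⟨-, hsub, -, -⟩ := hg
      funext b
      ext p
      rw [Finset.mem_filter, Finset.mem_biUnion]
      constructor
      · rintro ⟨⟨b', -, hb'⟩, hpb⟩
        have hpf := (hmemfib b' p).mp (hsub b' hb')
        rw [huniq p hpf.2 b b' hpb hpf.1]
        exact hb'
      · intro hp
        exact ⟨⟨b, Finset.mem_univ b, hp⟩, ((hmemfib b p).mp (hsub b hp)).1⟩
  rw [hbij]
  -- rewrite the condition using the profile lemma
  have hcong : (univ.filter fun g : β → Finset P =>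
        (∀ b, g b ⊆ fib b) ∧
          (∑ b, (g b).card = w + 1 ∧ ∑ b, ((g b).card).choose 2 = 2)) =
      (univ.filter fun g : β → Finset P =>
        (∀ b, g b ⊆ fib b) ∧ (univ.filter fun b => (g b).card = 2).card = 2 ∧
          (univ.filter fun b => (g b).card = 1).card = w - 3 ∧ ∀ b, (g b).card ≤ 2) := by
    apply Finset.filter_congr
    intro g _
    rw [and_congr_right_iff]
    intro _
    exact profile_iff w hw fun b => (g b).card
  rw [hcong]
  have hcount := count_profile q (w - 3) fib hfibcard
  simp only [hcardβ] at hcount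
  refine hcount.trans ?_
  have h1 : q + 1 - 2 = q - 1 := rfl
  rw [h1]
  ring
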